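/- Let p ≡ 1 (mod 4) be a prime, let ω be a generator of the multiplicative group of the field Z_p, and set ε = ω^{(p−1)/4}. Then the (p−1)/4 blocks {(0,ω^i), (0,ε²·ω^i), (1,ε·ω^i), (1,ε³·ω^i)} for 0 ≤ i < (p−1)/4 form a (G,H,4,1)-difference family over G = Z_3 × Z_p with H = Z_3 × {0}; in particular, a (3p,3,4,1)-CDF exists for every prime p ≡ 1 (mod 4). -/
import Mathlib


/-- The multiset of differences `f - f'` (with `f ≠ f'`) from a finset `F`. -/
def blockDiffs {G : Type*} [AddGroup G] [DecidableEq G] (F : Finset G) : Multiset G :=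
  ((F ×ˢ F).filter fun p => p.1 ≠ p.2).val.map fun p => p.1 - p.2

/-- A `(gh,h,k,1)`-CDF (cyclic relative difference family): a family `𝓕` of
`k`-element subsets of `Z_{gh}` (base blocks, possibly with repetitions) such that
the multiset of differences from all base blocks contains every element of
`Z_{gh}` outside the subgroup `H = g·Z_{gh}` (of order `h`) exactly once and
contains no element of `H`. -/
def IsCDF (g h k : ℕ) (𝓕 : Multiset (Finset (ZMod (g * h)))) : Prop :=
  (∀ F ∈ 𝓕, F.card = k) ∧
  (∀ x : ZMod (g * h), x ∈ AddSubgroup.zmultiples ((g : ZMod (g * h))) →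
    (𝓕.bind blockDiffs).count x = 0) ∧
  (∀ x : ZMod (g * h), x ∉ AddSubgroup.zmultiples ((g : ZMod (g * h))) →
    (𝓕.bind blockDiffs).count x = 1)
/-- A `(G,H,k,1)`-difference family over a general additive group. -/
def IsDF {G : Type*} [AddGroup G] [DecidableEq G] (H : AddSubgroup G) (k : ℕ)
    (𝓕 : Multiset (Finset G)) : Prop :=
  (∀ F ∈ 𝓕, F.card = k) ∧
  (∀ x : G, x ∈ H → (𝓕.bind blockDiffs).count x = 0) ∧
  (∀ x : G, x ∉ H → (𝓕.bind blockDiffs).count x = 1)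

lemma mem_blockDiffs {G : Type*} [AddGroup G] [DecidableEq G] {F : Finset G} {x : G} :
    x ∈ blockDiffs F ↔ ∃ a b, a ∈ F ∧ b ∈ F ∧ a ≠ b ∧ a - b = x := by
  simp only [blockDiffs, Multiset.mem_map, Finset.mem_val, Finset.mem_filter,
    Finset.mem_product, Prod.exists]
  constructor
  · rintro ⟨a, b, ⟨⟨h1, h2⟩, h3⟩, h4⟩; exact ⟨a, b, h1, h2, h3, h4⟩
  · rintro ⟨a, b, h1, h2, h3, h4⟩; exact ⟨a, b, ⟨⟨h1, h2⟩, h3⟩, h4⟩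

lemma blockDiffs_card {G : Type*} [AddGroup G] [DecidableEq G] (F : Finset G) :
    Multiset.card (blockDiffs F) = F.card * F.card - F.card := by
  have h1 : ((F ×ˢ F).filter fun p => p.1 = p.2) = F.image (fun a => (a, a)) := by
    ext ⟨a, b⟩
    simp only [Finset.mem_filter, Finset.mem_product, Finset.mem_image]
    constructor
    · rintro ⟨⟨h1, _⟩, rfl⟩; exact ⟨a, h1, rfl⟩
    · rintro ⟨c, hc, h⟩; cases h; exact ⟨⟨hc, hc⟩, rfl⟩
  have h2 := Finset.card_filter_add_card_filter_not (s := F ×ˢ F)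
    (p := fun p => p.1 = p.2)
  have h3 : (F.image fun a => (a, a)).card = F.card :=
    Finset.card_image_of_injective _ (fun a b h => by simpa [Prod.ext_iff] using h)
  rw [blockDiffs, Multiset.card_map]
  have h4 : (Multiset.card ((F ×ˢ F).filter fun p => p.1 ≠ p.2).val)
      = ((F ×ˢ F).filter fun p => p.1 ≠ p.2).card := rfl
  rw [h4]
  have h5 : ((F ×ˢ F).filter fun p => p.1 ≠ p.2).card
      = (F ×ˢ F).card - ((F ×ˢ F).filter fun p => p.1 = p.2).card := by
    simp only [ne_eq] at h2 ⊢
    omega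
  rw [h5, h1, h3, Finset.card_product]

lemma mset_map_product {α β α' β' : Type*} (f : α → α') (g : β → β') (s : Multiset α)
    (t : Multiset β) : (s ×ˢ t).map (Prod.map f g) = (s.map f) ×ˢ (t.map g) := by
  simp only [SProd.sprod, Multiset.product, Multiset.map_bind, Multiset.bind_map,
    Multiset.map_map, Function.comp_def, Prod.map_apply]

lemma blockDiffs_map {G G' : Type*} [AddGroup G] [AddGroup G'] [DecidableEq G] [DecidableEq G']
    (e : G ≃+ G') (F : Finset G) :
    blockDiffs (F.map e.toEquiv.toEmbedding) = (blockDiffs F).map e := by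
  unfold blockDiffs
  rw [Finset.filter_val, Finset.product_val, Finset.map_val, Finset.filter_val,
    Finset.product_val]
  have h1 : (F.val.map ⇑e.toEquiv.toEmbedding) ×ˢ (F.val.map ⇑e.toEquiv.toEmbedding)
      = (F.val ×ˢ F.val).map (Prod.map e e) := by
    rw [mset_map_product]; rfl
  rw [h1, Multiset.filter_map]
  have h2 : ((F.val ×ˢ F.val).filter ((fun p : G' × G' => p.1 ≠ p.2) ∘ Prod.map ⇑e ⇑e))
      = ((F.val ×ˢ F.val).filter fun p => p.1 ≠ p.2) := by
    apply Multiset.filter_congr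
    intro x _
    simp [Prod.map_fst, Prod.map_snd, e.injective.eq_iff]
  rw [h2, Multiset.map_map, Multiset.map_map]
  apply Multiset.map_congr rfl
  intro x _
  simp [map_sub]

lemma isDF_to_isCDF (p : ℕ) (hppos : p ≠ 0) (hcop : Nat.Coprime p 3)
    (𝓕 : Multiset (Finset (ZMod 3 × ZMod p)))
    (h : IsDF ((⊤ : AddSubgroup (ZMod 3)).prod (⊥ : AddSubgroup (ZMod p))) 4 𝓕) :
    ∃ 𝓕' : Multiset (Finset (ZMod (p * 3))), IsCDF p 3 4 𝓕' := by
  haveI : NeZero p := ⟨hppos⟩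
  haveI : NeZero (p * 3) := ⟨Nat.mul_ne_zero hppos (by norm_num)⟩
  set crt := ZMod.chineseRemainder hcop with hcrt
  set e : (ZMod 3 × ZMod p) ≃+ ZMod (p * 3) :=
    (AddEquiv.prodComm : ZMod 3 × ZMod p ≃+ ZMod p × ZMod 3).trans crt.symm.toAddEquiv with he
  obtain ⟨h1, h2, h3⟩ := h
  set π := ZMod.castHom (dvd_mul_right p 3) (ZMod p) with hπ
  have hπval : ∀ y : ZMod (p * 3), π y = ((y.val : ℕ) : ZMod p) := by
    intro y
    rw [hπ, ZMod.castHom_apply, ← ZMod.natCast_val]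
  have hker : ∀ y : ZMod (p * 3),
      y ∈ AddSubgroup.zmultiples ((p : ℕ) : ZMod (p * 3)) ↔ π y = 0 := by
    intro y
    rw [AddSubgroup.mem_zmultiples_iff]
    constructor
    · rintro ⟨m, rfl⟩
      rw [map_zsmul]
      have h0 : π ((p : ℕ) : ZMod (p * 3)) = 0 := by
        rw [map_natCast, ZMod.natCast_self]
      rw [h0, smul_zero]
    · intro h0
      rw [hπval] at h0
      obtain ⟨c, hc⟩ := (ZMod.natCast_eq_zero_iff _ _).mp h0
      refine ⟨(c : ℤ), ?_⟩
      have hy : ((y.val : ℕ) : ZMod (p * 3)) = y := by rw [ZMod.natCast_val, ZMod.cast_id]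
      rw [← hy, hc, zsmul_eq_mul]
      push_cast
      ring
  have hfst : ∀ y : ZMod (p * 3), (crt y).1 = π y := by
    intro y
    show (ZMod.castHom (show Nat.lcm p 3 ∣ p * 3 by simp [Nat.lcm_dvd_iff]) (ZMod p × ZMod 3) y).1 = π y
    rw [ZMod.castHom_apply, Prod.fst_zmod_cast, hπ, ZMod.castHom_apply]
  have hsymm2 : ∀ y : ZMod (p * 3), (e.symm y).2 = (crt y).1 := fun y => rfl
  have hbind : (𝓕.map (Finset.map e.toEquiv.toEmbedding)).bind blockDiffs
      = (𝓕.bind blockDiffs).map e := by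
    rw [Multiset.bind_map, Multiset.map_bind]
    exact Multiset.bind_congr fun F _ => blockDiffs_map e F
  have hcnt : ∀ y : ZMod (p * 3),
      ((𝓕.bind blockDiffs).map e).count y = (𝓕.bind blockDiffs).count (e.symm y) := by
    intro y
    conv_lhs => rw [show y = e (e.symm y) from (e.apply_symm_apply y).symm]
    exact Multiset.count_map_eq_count' e _ e.injective _
  refine ⟨𝓕.map (Finset.map e.toEquiv.toEmbedding), ?_, ?_, ?_⟩
  · intro F hF
    obtain ⟨F0, hF0, rfl⟩ := Multiset.mem_map.mp hF
    rw [Finset.card_map]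
    exact h1 F0 hF0
  · intro x hx
    rw [hbind, hcnt]
    apply h2
    refine AddSubgroup.mem_prod.mpr ⟨AddSubgroup.mem_top _, ?_⟩
    rw [AddSubgroup.mem_bot, hsymm2, hfst]
    exact (hker x).mp hx
  · intro x hx
    rw [hbind, hcnt]
    apply h3
    intro hmem'
    apply hx
    rw [hker x, ← hfst, ← hsymm2]
    have h2' := (AddSubgroup.mem_prod.mp hmem').2
    rwa [AddSubgroup.mem_bot] at h2'

set_option maxHeartbeats 2000000 in
/-- Let `p ≡ 1 (mod 4)` be a prime, `ω` a generator of the multiplicative group of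
`Z_p`, and `ε = ω^((p-1)/4)`. Then the blocks
`{(0,ω^i), (0,ε²ω^i), (1,εω^i), (1,ε³ω^i)}`, `0 ≤ i < (p-1)/4`, form a
`(G,H,4,1)`-DF over `G = Z_3 × Z_p` relative to `H = Z_3 × {0}`; in particular a
`(3p,3,4,1)`-CDF exists. -/
theorem stmt_4 (p : ℕ) (hp : p.Prime) (hpmod : p % 4 = 1)
    (ω : (ZMod p)ˣ) (hω : ∀ u : (ZMod p)ˣ, u ∈ Subgroup.zpowers ω)
    (ε : (ZMod p)ˣ) (hε : ε = ω ^ ((p - 1) / 4)) :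
    IsDF ((⊤ : AddSubgroup (ZMod 3)).prod (⊥ : AddSubgroup (ZMod p))) 4
      ((Multiset.range ((p - 1) / 4)).map fun i =>
        ({((0 : ZMod 3), ((ω : ZMod p)) ^ i),
          ((0 : ZMod 3), ((ε ^ 2 : (ZMod p)ˣ) : ZMod p) * ((ω : ZMod p)) ^ i),
          ((1 : ZMod 3), ((ε : (ZMod p)ˣ) : ZMod p) * ((ω : ZMod p)) ^ i),
          ((1 : ZMod 3), ((ε ^ 3 : (ZMod p)ˣ) : ZMod p) * ((ω : ZMod p)) ^ i)} :
            Finset (ZMod 3 × ZMod p))) ∧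
    ∃ 𝓕 : Multiset (Finset (ZMod (p * 3))), IsCDF p 3 4 𝓕 := by
  haveI hfact : Fact p.Prime := ⟨hp⟩
  have hp2 := hp.two_le
  have hp5 : 5 ≤ p := by omega
  haveI : Fact (2 < p) := ⟨by omega⟩
  haveI : NeZero p := ⟨by omega⟩
  have hDF : IsDF ((⊤ : AddSubgroup (ZMod 3)).prod (⊥ : AddSubgroup (ZMod p))) 4
      ((Multiset.range ((p - 1) / 4)).map fun i =>
        ({((0 : ZMod 3), ((ω : ZMod p)) ^ i),
          ((0 : ZMod 3), ((ε ^ 2 : (ZMod p)ˣ) : ZMod p) * ((ω : ZMod p)) ^ i),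
          ((1 : ZMod 3), ((ε : (ZMod p)ˣ) : ZMod p) * ((ω : ZMod p)) ^ i),
          ((1 : ZMod 3), ((ε ^ 3 : (ZMod p)ˣ) : ZMod p) * ((ω : ZMod p)) ^ i)} :
            Finset (ZMod 3 × ZMod p))) := by
    simp only [Units.val_pow_eq_pow_val]
    set n := (p - 1) / 4 with hn
    have h4n : 4 * n = p - 1 := by omega
    have hn0 : 0 < n := by omega
    set W0 : ZMod p := (ω : ZMod p) with hW0def
    set E : ZMod p := (ε : ZMod p) with hEdef
    have hW0 : W0 ≠ 0 := Units.ne_zero ω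
    have hE0 : E ≠ 0 := Units.ne_zero ε
    have hne11 : (-1 : ZMod p) ≠ 1 := ZMod.neg_one_ne_one
    have h2 : (2 : ZMod p) ≠ 0 := by
      intro h
      rw [show (2 : ZMod p) = ((2 : ℕ) : ZMod p) by norm_num] at h
      have := (ZMod.natCast_eq_zero_iff 2 p).mp h
      have := Nat.le_of_dvd (by norm_num) this
      omega
    have hordw : orderOf ω = p - 1 := by
      have := orderOf_eq_card_of_forall_mem_zpowers hω
      rwa [Nat.card_eq_fintype_card, ZMod.card_units_eq_totient, Nat.totient_prime hp] at this
    have hε4 : ε ^ 4 = 1 := by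
      rw [hε, ← pow_mul]
      have h44 : (p - 1) / 4 * 4 = p - 1 := by omega
      rw [h44, ← hordw, pow_orderOf_eq_one]
    have hε2 : ε ^ 2 ≠ 1 := by
      intro h
      rw [hε, ← pow_mul] at h
      have hd := orderOf_dvd_of_pow_eq_one h
      rw [hordw] at hd
      have := Nat.le_of_dvd (by omega) hd
      omega
    have hE2 : E ^ 2 = -1 := by
      have h44 : E ^ 2 * E ^ 2 = 1 := by
        have hc : ((ε ^ 4 : (ZMod p)ˣ) : ZMod p) = 1 := by rw [hε4]; rfl
        rw [Units.val_pow_eq_pow_val] at hc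
        calc E ^ 2 * E ^ 2 = E ^ 4 := by ring
          _ = 1 := hc
      rcases mul_self_eq_one_iff.mp h44 with h | h
      · exact absurd (Units.val_eq_one.mp (by rw [Units.val_pow_eq_pow_val]; exact h)) hε2
      · exact h
    have hE1 : E ≠ 1 := by
      intro h; rw [h, one_pow] at hE2; exact hne11 hE2.symm
    have hEm1 : E ≠ -1 := by
      intro h; rw [h, neg_one_sq] at hE2; exact hne11 hE2.symm
    have hEpow : E = W0 ^ n := by
      rw [hEdef, hε, Units.val_pow_eq_pow_val, ← hW0def]
    have hWne : ∀ W : ZMod p, W ≠ 0 →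
        (W ≠ E * W ∧ W ≠ E ^ 2 * W ∧ W ≠ E ^ 3 * W ∧
         E * W ≠ E ^ 2 * W ∧ E * W ≠ E ^ 3 * W ∧ E ^ 2 * W ≠ E ^ 3 * W) := by
      intro W hW
      have hc : ∀ x y : ZMod p, x * W = y * W → x = y := fun x y h => mul_right_cancel₀ hW h
      refine ⟨?_, ?_, ?_, ?_, ?_, ?_⟩
      · intro h; exact hE1 (hc 1 E (by rw [one_mul]; exact h)).symm
      · intro h
        have h1 : (1 : ZMod p) = E ^ 2 := hc 1 (E ^ 2) (by rw [one_mul]; exact h)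
        rw [hE2] at h1; exact hne11 h1.symm
      · intro h
        have h1 : (1 : ZMod p) = E ^ 3 := hc 1 (E ^ 3) (by rw [one_mul]; exact h)
        exact hEm1 (by linear_combination h1 + E * hE2)
      · intro h
        have h1 := hc E (E ^ 2) h
        exact hEm1 (by linear_combination h1 + hE2)
      · intro h
        have h1 := hc E (E ^ 3) h
        have h2' : (1 : ZMod p) = E ^ 2 := by
          apply mul_left_cancel₀ hE0; linear_combination h1
        rw [hE2] at h2'; exact hne11 h2'.symm
      · intro h
        have h1 := hc (E ^ 2) (E ^ 3) h
        exact hE1 (by linear_combination h1 + (E - 1) * hE2)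
    have h01 : (0 : ZMod 3) ≠ 1 := by decide
    have h10 : (1 : ZMod 3) ≠ 0 := by decide
    set Bf : ℕ → Finset (ZMod 3 × ZMod p) := fun i =>
      ({((0 : ZMod 3), W0 ^ i), ((0 : ZMod 3), E ^ 2 * W0 ^ i),
        ((1 : ZMod 3), E * W0 ^ i), ((1 : ZMod 3), E ^ 3 * W0 ^ i)} :
        Finset (ZMod 3 × ZMod p)) with hBf
    set D : Multiset (ZMod 3 × ZMod p) := ((Multiset.range n).map Bf).bind blockDiffs with hD
    have hBcard : ∀ i : ℕ, (Bf i).card = 4 := by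
      intro i
      obtain ⟨d1, d2, d3, d4, d5, d6⟩ := hWne (W0 ^ i) (pow_ne_zero _ hW0)
      rw [hBf]
      rw [Finset.card_insert_of_notMem (by simp [Prod.ext_iff, d2, h01]),
        Finset.card_insert_of_notMem (by simp [Prod.ext_iff, h01]),
        Finset.card_insert_of_notMem (by simp [Prod.ext_iff, d5]),
        Finset.card_singleton]
    have hsnd : ∀ x : ZMod 3 × ZMod p, x ∈ D → x.2 ≠ 0 := by
      intro x hx
      obtain ⟨F, hF, hxF⟩ := Multiset.mem_bind.mp hx
      obtain ⟨i, _, rfl⟩ := Multiset.mem_map.mp hF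
      obtain ⟨a, b, ha, hb, hab, rfl⟩ := mem_blockDiffs.mp hxF
      obtain ⟨d1, d2, d3, d4, d5, d6⟩ := hWne (W0 ^ i) (pow_ne_zero _ hW0)
      simp only [hBf, Finset.mem_insert, Finset.mem_singleton] at ha hb
      rcases ha with rfl | rfl | rfl | rfl <;> rcases hb with rfl | rfl | rfl | rfl <;>
        simp only [Prod.snd_sub] <;>
        first
          | exact absurd rfl hab
          | exact sub_ne_zero_of_ne d1
          | exact sub_ne_zero_of_ne d1.symm
          | exact sub_ne_zero_of_ne d2
          | exact sub_ne_zero_of_ne d2.symm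
          | exact sub_ne_zero_of_ne d3
          | exact sub_ne_zero_of_ne d3.symm
          | exact sub_ne_zero_of_ne d4
          | exact sub_ne_zero_of_ne d4.symm
          | exact sub_ne_zero_of_ne d5
          | exact sub_ne_zero_of_ne d5.symm
          | exact sub_ne_zero_of_ne d6
          | exact sub_ne_zero_of_ne d6.symm
    have hdlog : ∀ s : ZMod p, s ≠ 0 → ∃ i j : ℕ, i < n ∧ j < 4 ∧ s = E ^ j * W0 ^ i := by
      intro s hs
      obtain ⟨u, hu⟩ := isUnit_iff_ne_zero.mpr hs
      obtain ⟨m, hm⟩ := Subgroup.mem_zpowers_iff.mp (hω u)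
      have hNpos : (0 : ℤ) < (p : ℤ) - 1 := by
        have : (5 : ℤ) ≤ (p : ℤ) := by exact_mod_cast hp5
        omega
      have hone : ω ^ ((p : ℤ) - 1) = 1 := by
        have h1 : ω ^ (p - 1) = 1 := by rw [← hordw]; exact pow_orderOf_eq_one ω
        have hcast : ((p : ℤ) - 1) = ((p - 1 : ℕ) : ℤ) := by
          have h5' : (5 : ℤ) ≤ (p : ℤ) := by exact_mod_cast hp5
          omega
        rw [hcast, zpow_natCast, h1]
      set k : ℕ := (m % ((p : ℤ) - 1)).toNat with hk
      have hk0 : (0 : ℤ) ≤ m % ((p : ℤ) - 1) := Int.emod_nonneg m (by omega)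
      have hkcast : (k : ℤ) = m % ((p : ℤ) - 1) := Int.toNat_of_nonneg hk0
      have hklt : k < p - 1 := by
        have hlt := Int.emod_lt_of_pos m hNpos
        omega
      have hku : ω ^ k = u := by
        rw [← hm, ← zpow_natCast, hkcast]
        calc ω ^ (m % ((p : ℤ) - 1))
            = ω ^ (m % ((p : ℤ) - 1)) * (ω ^ ((p : ℤ) - 1)) ^ (m / ((p : ℤ) - 1)) := by
              rw [hone, one_zpow, mul_one]
          _ = ω ^ (m % ((p : ℤ) - 1) + ((p : ℤ) - 1) * (m / ((p : ℤ) - 1))) := by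
              rw [← zpow_mul, ← zpow_add]
          _ = ω ^ m := by rw [Int.emod_add_mul_ediv]
      refine ⟨k % n, k / n, Nat.mod_lt _ hn0, ?_, ?_⟩
      · rw [Nat.div_lt_iff_lt_mul hn0]
        omega
      · rw [hEpow, ← pow_mul, ← pow_add, ← hu, ← hku, Units.val_pow_eq_pow_val, ← hW0def]
        congr 1
        exact (Nat.div_add_mod k n).symm
    have hmemD : ∀ i, i < n → ∀ f1 f2 : ZMod 3 × ZMod p,
        f1 ∈ Bf i → f2 ∈ Bf i → f1 ≠ f2 → f1 - f2 ∈ D := by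
      intro i hi f1 f2 h1 h2' h12
      refine Multiset.mem_bind.mpr ⟨Bf i,
        Multiset.mem_map.mpr ⟨i, Multiset.mem_range.mpr hi, rfl⟩, ?_⟩
      exact mem_blockDiffs.mpr ⟨f1, f2, h1, h2', h12, rfl⟩
    have hmem : ∀ x : ZMod 3 × ZMod p, x.2 ≠ 0 → x ∈ D := by
      rintro ⟨a, t⟩ ht
      have ha3 : a = 0 ∨ a = 1 ∨ a = 2 := by
        have h3 : ∀ b : ZMod 3, b = 0 ∨ b = 1 ∨ b = 2 := by decide
        exact h3 a
      have hE10 : E - 1 ≠ 0 := sub_ne_zero_of_ne hE1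
      simp only at ht
      rcases ha3 with rfl | rfl | rfl
      · obtain ⟨i, j, hi, hj, hs⟩ := hdlog (t / 2) (div_ne_zero ht h2)
        have ht' : t = 2 * (E ^ j * W0 ^ i) := by rw [← hs]; field_simp
        obtain ⟨d1, d2, d3, d4, d5, d6⟩ := hWne (W0 ^ i) (pow_ne_zero _ hW0)
        interval_cases j
        · have he : ((0 : ZMod 3), t) = ((0 : ZMod 3), W0 ^ i) - (0, E ^ 2 * W0 ^ i) := by
            rw [Prod.mk_sub_mk]
            exact congrArg₂ Prod.mk (by decide) (by linear_combination ht' + (W0 ^ i) * hE2)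
          rw [he]
          exact hmemD i hi _ _ (by simp [hBf]) (by simp [hBf])
            (fun h => d2 (congrArg Prod.snd h))
        · have he : ((0 : ZMod 3), t) = ((1 : ZMod 3), E * W0 ^ i) - (1, E ^ 3 * W0 ^ i) := by
            rw [Prod.mk_sub_mk]
            exact congrArg₂ Prod.mk (by decide) (by linear_combination ht' + E * W0 ^ i * hE2)
          rw [he]
          exact hmemD i hi _ _ (by simp [hBf]) (by simp [hBf])
            (fun h => d5 (congrArg Prod.snd h))
        · have he : ((0 : ZMod 3), t) = ((0 : ZMod 3), E ^ 2 * W0 ^ i) - (0, W0 ^ i) := by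
            rw [Prod.mk_sub_mk]
            exact congrArg₂ Prod.mk (by decide) (by linear_combination ht' + (W0 ^ i) * hE2)
          rw [he]
          exact hmemD i hi _ _ (by simp [hBf]) (by simp [hBf])
            (fun h => d2 (congrArg Prod.snd h).symm)
        · have he : ((0 : ZMod 3), t) = ((1 : ZMod 3), E ^ 3 * W0 ^ i) - (1, E * W0 ^ i) := by
            rw [Prod.mk_sub_mk]
            exact congrArg₂ Prod.mk (by decide) (by linear_combination ht' + E * W0 ^ i * hE2)
          rw [he]
          exact hmemD i hi _ _ (by simp [hBf]) (by simp [hBf])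
            (fun h => d5 (congrArg Prod.snd h).symm)
      · obtain ⟨i, j, hi, hj, hs⟩ := hdlog (t / (E - 1)) (div_ne_zero ht hE10)
        have ht' : t = (E - 1) * (E ^ j * W0 ^ i) := by rw [← hs]; field_simp
        interval_cases j
        · have he : ((1 : ZMod 3), t) = ((1 : ZMod 3), E * W0 ^ i) - (0, W0 ^ i) := by
            rw [Prod.mk_sub_mk]
            exact congrArg₂ Prod.mk (by decide) (by linear_combination ht')
          rw [he]
          exact hmemD i hi _ _ (by simp [hBf]) (by simp [hBf])
            (fun h => h10 (congrArg Prod.fst h))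
        · have he : ((1 : ZMod 3), t) = ((1 : ZMod 3), E ^ 3 * W0 ^ i) - (0, W0 ^ i) := by
            rw [Prod.mk_sub_mk]
            exact congrArg₂ Prod.mk (by decide)
              (by linear_combination ht' + (1 - E) * W0 ^ i * hE2)
          rw [he]
          exact hmemD i hi _ _ (by simp [hBf]) (by simp [hBf])
            (fun h => h10 (congrArg Prod.fst h))
        · have he : ((1 : ZMod 3), t) = ((1 : ZMod 3), E ^ 3 * W0 ^ i) - (0, E ^ 2 * W0 ^ i) := by
            rw [Prod.mk_sub_mk]
            exact congrArg₂ Prod.mk (by decide) (by linear_combination ht')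
          rw [he]
          exact hmemD i hi _ _ (by simp [hBf]) (by simp [hBf])
            (fun h => h10 (congrArg Prod.fst h))
        · have he : ((1 : ZMod 3), t) = ((1 : ZMod 3), E * W0 ^ i) - (0, E ^ 2 * W0 ^ i) := by
            rw [Prod.mk_sub_mk]
            exact congrArg₂ Prod.mk (by decide)
              (by linear_combination ht' + (E ^ 2 - E) * W0 ^ i * hE2)
          rw [he]
          exact hmemD i hi _ _ (by simp [hBf]) (by simp [hBf])
            (fun h => h10 (congrArg Prod.fst h))
      · obtain ⟨i, j, hi, hj, hs⟩ := hdlog (t / (E - 1)) (div_ne_zero ht hE10)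
        have ht' : t = (E - 1) * (E ^ j * W0 ^ i) := by rw [← hs]; field_simp
        interval_cases j
        · have he : ((2 : ZMod 3), t) = ((0 : ZMod 3), E ^ 2 * W0 ^ i) - (1, E ^ 3 * W0 ^ i) := by
            rw [Prod.mk_sub_mk]
            exact congrArg₂ Prod.mk (by decide)
              (by linear_combination ht' + (E - 1) * W0 ^ i * hE2)
          rw [he]
          exact hmemD i hi _ _ (by simp [hBf]) (by simp [hBf])
            (fun h => h01 (congrArg Prod.fst h))
        · have he : ((2 : ZMod 3), t) = ((0 : ZMod 3), E ^ 2 * W0 ^ i) - (1, E * W0 ^ i) := by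
            rw [Prod.mk_sub_mk]
            exact congrArg₂ Prod.mk (by decide) (by linear_combination ht')
          rw [he]
          exact hmemD i hi _ _ (by simp [hBf]) (by simp [hBf])
            (fun h => h01 (congrArg Prod.fst h))
        · have he : ((2 : ZMod 3), t) = ((0 : ZMod 3), W0 ^ i) - (1, E * W0 ^ i) := by
            rw [Prod.mk_sub_mk]
            exact congrArg₂ Prod.mk (by decide)
              (by linear_combination ht' + (E - 1) * W0 ^ i * hE2)
          rw [he]
          exact hmemD i hi _ _ (by simp [hBf]) (by simp [hBf])
            (fun h => h01 (congrArg Prod.fst h))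
        · have he : ((2 : ZMod 3), t) = ((0 : ZMod 3), W0 ^ i) - (1, E ^ 3 * W0 ^ i) := by
            rw [Prod.mk_sub_mk]
            exact congrArg₂ Prod.mk (by decide)
              (by linear_combination ht' + (E ^ 2 - 1) * W0 ^ i * hE2)
          rw [he]
          exact hmemD i hi _ _ (by simp [hBf]) (by simp [hBf])
            (fun h => h01 (congrArg Prod.fst h))
    have hcardD : Multiset.card D = 3 * (p - 1) := by
      rw [hD, Multiset.card_bind, Multiset.map_map]
      have hc : ∀ i ∈ Multiset.range n,
          ((Multiset.card ∘ blockDiffs) ∘ Bf) i = (fun _ : ℕ => 12) i := by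
        intro i _
        simp only [Function.comp_apply, blockDiffs_card, hBcard]
      rw [Multiset.map_congr rfl hc]
      have : ((Multiset.range n).map fun _ : ℕ => 12).sum = n * 12 := by
        rw [Multiset.map_const', Multiset.sum_replicate, Multiset.card_range, smul_eq_mul]
      rw [this]
      omega
    have hsum : ∑ x : ZMod 3 × ZMod p, D.count x = Multiset.card D := by
      rw [← Multiset.toFinset_sum_count_eq D]
      exact (Finset.sum_subset (Finset.subset_univ _) (fun x _ hx =>
        Multiset.count_eq_zero.mpr fun h => hx (Multiset.mem_toFinset.mpr h))).symm
    have hScard : (Finset.univ.filter fun x : ZMod 3 × ZMod p => ¬ x.2 = 0).card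
        = 3 * (p - 1) := by
      have h1 : (Finset.univ.filter fun x : ZMod 3 × ZMod p => x.2 = 0)
          = Finset.univ ×ˢ ({0} : Finset (ZMod p)) := by
        ext ⟨a, b⟩
        simp [Finset.mem_product, eq_comm]
      have h2' := Finset.card_filter_add_card_filter_not
        (s := (Finset.univ : Finset (ZMod 3 × ZMod p))) (p := fun x => x.2 = 0)
      rw [h1] at h2'
      have h3 : ((Finset.univ : Finset (ZMod 3)) ×ˢ ({0} : Finset (ZMod p))).card = 3 := by
        rw [Finset.card_product, Finset.card_singleton, Finset.card_univ, mul_one, ZMod.card 3]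
      have h4 : (Finset.univ : Finset (ZMod 3 × ZMod p)).card = 3 * p := by
        rw [Finset.card_univ, Fintype.card_prod, ZMod.card 3, ZMod.card p]
      omega
    have hcount1 : ∀ x : ZMod 3 × ZMod p, x.2 ≠ 0 → D.count x = 1 := by
      have hsplit := Finset.sum_filter_add_sum_filter_not Finset.univ
        (fun x : ZMod 3 × ZMod p => x.2 = 0) (fun x => D.count x)
      have hzero : ∑ x ∈ Finset.univ.filter (fun x : ZMod 3 × ZMod p => x.2 = 0),
          D.count x = 0 := by
        apply Finset.sum_eq_zero
        intro x hx
        rw [Finset.mem_filter] at hx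
        exact Multiset.count_eq_zero.mpr fun h => hsnd x h hx.2
      have hSsum : ∑ x ∈ Finset.univ.filter (fun x : ZMod 3 × ZMod p => ¬ x.2 = 0),
          D.count x = 3 * (p - 1) := by
        omega
      have hle : ∀ x ∈ Finset.univ.filter (fun x : ZMod 3 × ZMod p => ¬ x.2 = 0),
          (fun _ => 1) x ≤ (fun x => D.count x) x := by
        intro x hx
        rw [Finset.mem_filter] at hx
        exact Multiset.one_le_count_iff_mem.mpr (hmem x hx.2)
      have hones : ∑ x ∈ Finset.univ.filter (fun x : ZMod 3 × ZMod p => ¬ x.2 = 0),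
          (fun _ : ZMod 3 × ZMod p => 1) x = 3 * (p - 1) := by
        rw [Finset.sum_const, smul_eq_mul, mul_one, hScard]
      have heq := (Finset.sum_eq_sum_iff_of_le hle).mp (by rw [hones, hSsum])
      intro x hx
      exact (heq x (Finset.mem_filter.mpr ⟨Finset.mem_univ x, hx⟩)).symm
    refine ⟨?_, ?_, ?_⟩
    · intro F hF
      obtain ⟨i, _, rfl⟩ := Multiset.mem_map.mp hF
      exact hBcard i
    · intro x hx
      have hx2 : x.2 = 0 := by simpa using (AddSubgroup.mem_prod.mp hx).2
      exact Multiset.count_eq_zero.mpr fun h => hsnd x h hx2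
    · intro x hx
      apply hcount1
      intro h0
      exact hx (AddSubgroup.mem_prod.mpr ⟨AddSubgroup.mem_top _, by simpa using h0⟩)




  exact ⟨hDF, isDF_to_isCDF p (by omega) ((Nat.coprime_primes hp (by norm_num)).mpr (by omega)) _ hDF⟩
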